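/- Let b = 1/(1−p), fix r ≥ 2 and ε ∈ (0,1), and let α_ε = (1−ε)·(r!·log_b n)^{1/(r−1)}. Then with probability tending to 1 as n → ∞, the random hypergraph H_r(n,p) contains an independent set of size at least α_ε. -/

import Mathlib

open MeasureTheory Filter
open scoped ENNReal

/-- measure of a cylinder set requiring finitely many coordinates to be false -/
lemma cyl_meas {n : ℕ} {p : ℝ} (hp0 : 0 ≤ p) (hple : ENNReal.ofReal p ≤ 1)
    (A : Finset (Finset (Fin n))) :
    Measure.pi (fun _ : Finset (Fin n) => (PMF.bernoulli (Real.toNNReal p) (ENNReal.coe_le_one_iff.mp hple)).toMeasure)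
      {E : Finset (Fin n) → Bool | ∀ e ∈ A, E e = false}
      = ENNReal.ofReal (1 - p) ^ A.card := by
  classical
  have hset : {E : Finset (Fin n) → Bool | ∀ e ∈ A, E e = false}
      = Set.pi Set.univ (fun e => if e ∈ A then ({false} : Set Bool) else Set.univ) := by
    ext E
    simp only [Set.mem_setOf_eq, Set.mem_pi, Set.mem_univ, forall_true_left]
    constructor
    · intro h e
      by_cases he : e ∈ A <;> simp [he, h e]
    · intro h e he
      have := h e
      simpa [he] using this
  rw [hset, Measure.pi_pi]
  have hsingle : (PMF.bernoulli (Real.toNNReal p) (ENNReal.coe_le_one_iff.mp hple)).toMeasure ({false} : Set Bool)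
      = ENNReal.ofReal (1 - p) := by
    rw [PMF.toMeasure_apply_singleton _ _ (measurableSet_singleton _), PMF.bernoulli_apply]
    simp only [Bool.cond_false]
    rw [ENNReal.ofReal_sub _ hp0, ENNReal.ofReal_one]
    change _ = 1 - ((Real.toNNReal p : NNReal) : ℝ≥0∞)
    rw [ENNReal.coe_sub, ENNReal.coe_one]
  have : ∀ e : Finset (Fin n),
      (PMF.bernoulli (Real.toNNReal p) (ENNReal.coe_le_one_iff.mp hple)).toMeasure
        (if e ∈ A then ({false} : Set Bool) else Set.univ)
      = if e ∈ A then ENNReal.ofReal (1 - p) else 1 := by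
    intro e
    by_cases he : e ∈ A
    · simp [he, hsingle]
    · simp only [he, if_false]
      exact measure_univ
  rw [Finset.prod_congr rfl fun e _ => this e, Finset.prod_ite_mem, Finset.univ_inter,
    Finset.prod_const]

/-- measure of a finite set as a sum of point masses -/
lemma meas_finset_sum {Ω : Type*} [MeasurableSpace Ω] [MeasurableSingletonClass Ω]
    (μ : Measure Ω) (F : Finset Ω) : μ ↑F = ∑ ω ∈ F, μ {ω} := by
  have : (↑F : Set Ω) = ⋃ ω ∈ F, ({ω} : Set Ω) := by ext x; simp
  rw [this, measure_biUnion_finset]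
  · intro a _ b _ hab
    simp [Function.onFun, Set.disjoint_singleton, hab]
  · intro a _; exact measurableSet_singleton a

/-- Cauchy–Schwarz core inequality -/
lemma cs_core {Ω : Type*} [Fintype Ω] (w X : Ω → ℝ) (hw : ∀ ω, 0 ≤ w ω)
    (P : Finset Ω) (hP : ∀ ω, X ω ≠ 0 → ω ∈ P) :
    (∑ ω, w ω * X ω) ^ 2 ≤ (∑ ω ∈ P, w ω) * ∑ ω, w ω * X ω ^ 2 := by
  classical
  have h1 : ∑ ω, w ω * X ω = ∑ ω ∈ P, w ω * X ω := by
    refine (Finset.sum_subset (Finset.subset_univ P) ?_).symm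
    intro ω _ hω
    have : X ω = 0 := by by_contra h; exact hω (hP ω h)
    simp [this]
  have h2 : (∑ ω ∈ P, w ω * X ω) ^ 2
      ≤ (∑ ω ∈ P, w ω) * ∑ ω ∈ P, w ω * X ω ^ 2 := by
    have := Finset.sum_mul_sq_le_sq_mul_sq P (fun ω => Real.sqrt (w ω))
      (fun ω => Real.sqrt (w ω) * X ω)
    have e1 : ∀ ω, Real.sqrt (w ω) * (Real.sqrt (w ω) * X ω) = w ω * X ω := by
      intro ω; rw [← mul_assoc, Real.mul_self_sqrt (hw ω)]
    have e2 : ∀ ω, Real.sqrt (w ω) ^ 2 = w ω := fun ω => Real.sq_sqrt (hw ω)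
    have e3 : ∀ ω, (Real.sqrt (w ω) * X ω) ^ 2 = w ω * X ω ^ 2 := by
      intro ω; rw [mul_pow, e2]
    calc (∑ ω ∈ P, w ω * X ω) ^ 2
        = (∑ ω ∈ P, Real.sqrt (w ω) * (Real.sqrt (w ω) * X ω)) ^ 2 := by
          simp_rw [e1]
      _ ≤ (∑ ω ∈ P, Real.sqrt (w ω) ^ 2) * ∑ ω ∈ P, (Real.sqrt (w ω) * X ω) ^ 2 := this
      _ = (∑ ω ∈ P, w ω) * ∑ ω ∈ P, w ω * X ω ^ 2 := by simp_rw [e2, e3]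
  have h3 : ∑ ω ∈ P, w ω * X ω ^ 2 ≤ ∑ ω, w ω * X ω ^ 2 := by
    refine Finset.sum_le_sum_of_subset_of_nonneg (Finset.subset_univ P) ?_
    intro ω _ _; exact mul_nonneg (hw ω) (sq_nonneg _)
  have h4 : 0 ≤ ∑ ω ∈ P, w ω := Finset.sum_nonneg fun ω _ => hw ω
  rw [h1]
  exact h2.trans (by nlinarith [h4])

/-- counting sets T of size k with |S ∩ T| = i -/
lemma fiber_card {n k i : ℕ} (S : Finset (Fin n)) (hS : S.card = k) :
    ((Finset.powersetCard k (Finset.univ : Finset (Fin n))).filter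
        (fun T => (S ∩ T).card = i)).card
      ≤ k.choose i * n.choose (k - i) := by
  classical
  have hcard : ((Finset.powersetCard i S) ×ˢ
      (Finset.powersetCard (k - i) (Finset.univ : Finset (Fin n)))).card
      = k.choose i * n.choose (k - i) := by
    rw [Finset.card_product, Finset.card_powersetCard, Finset.card_powersetCard, hS,
      Finset.card_univ, Fintype.card_fin]
  rw [← hcard]
  refine Finset.card_le_card_of_injOn (fun T => (S ∩ T, T \ S)) ?_ ?_
  · intro T hT
    simp only [Finset.mem_coe, Finset.mem_filter, Finset.mem_powersetCard] at hT
    obtain ⟨⟨_, hTcard⟩, hTi⟩ := hT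
    simp only [Finset.mem_coe, Finset.mem_product, Finset.mem_powersetCard]
    refine ⟨⟨Finset.inter_subset_left, hTi⟩, Finset.subset_univ _, ?_⟩
    have h := Finset.card_sdiff_add_card_inter T S
    rw [Finset.inter_comm T S, hTi, hTcard] at h
    omega
  · intro T₁ h₁ T₂ h₂ heq
    simp only [Prod.mk.injEq] at heq
    have hrec : ∀ T : Finset (Fin n), (S ∩ T) ∪ (T \ S) = T := by
      intro T; ext a
      simp only [Finset.mem_union, Finset.mem_inter, Finset.mem_sdiff]
      tauto
    rw [← hrec T₁, ← hrec T₂, heq.1, heq.2]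

/-- binomial ratio bound -/
lemma choose_ratio {n k : ℕ} (hk : k ≤ n) :
    ∀ i ≤ k, n.choose (k - i) * (n - k) ^ i ≤ n.choose k * k ^ i := by
  intro i hik
  induction i with
  | zero => simp
  | succ i ih =>
    have hik' : i ≤ k := Nat.le_of_succ_le hik
    have key : n.choose (k - (i + 1)) * (n - k) ≤ n.choose (k - i) * k := by
      have hki : k - (i + 1) + 1 = k - i := by omega
      have h := Nat.choose_succ_right_eq n (k - (i + 1))
      rw [hki] at h
      calc n.choose (k - (i + 1)) * (n - k)
          ≤ n.choose (k - (i + 1)) * (n - (k - (i + 1))) :=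
            Nat.mul_le_mul_left _ (Nat.sub_le_sub_left (Nat.sub_le k (i + 1)) n)
        _ = n.choose (k - i) * (k - i) := h.symm
        _ ≤ n.choose (k - i) * k := Nat.mul_le_mul_left _ (by omega)
    calc n.choose (k - (i + 1)) * (n - k) ^ (i + 1)
        = (n.choose (k - (i + 1)) * (n - k)) * (n - k) ^ i := by ring
      _ ≤ (n.choose (k - i) * k) * (n - k) ^ i := Nat.mul_le_mul_right _ key
      _ = k * (n.choose (k - i) * (n - k) ^ i) := by ring
      _ ≤ k * (n.choose k * k ^ i) := Nat.mul_le_mul_left _ (ih hik')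
      _ = n.choose k * k ^ (i + 1) := by ring

/-- k * C(i,r) ≤ i * C(k,r) for i ≤ k -/
lemma choose_slope {i k r : ℕ} (hik : i ≤ k) (hr : 1 ≤ r) :
    k * i.choose r ≤ i * k.choose r := by
  rcases Nat.eq_zero_or_pos i with hi | hi
  · subst hi
    simp [Nat.choose_eq_zero_of_lt (by omega : 0 < r)]
  obtain ⟨j, rfl⟩ : ∃ j, i = j + 1 := ⟨i - 1, by omega⟩
  obtain ⟨l, rfl⟩ : ∃ l, k = l + 1 := ⟨k - 1, by omega⟩
  obtain ⟨s, rfl⟩ : ∃ s, r = s + 1 := ⟨r - 1, by omega⟩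
  have h1 := Nat.add_one_mul_choose_eq j s
  have h2 := Nat.add_one_mul_choose_eq l s
  -- h1 : (j+1) * j.choose s = (j+1).choose (s+1) * (s+1)
  have hmono : j.choose s ≤ l.choose s := Nat.choose_le_choose s (by omega)
  refine Nat.le_of_mul_le_mul_right ?_ (Nat.succ_pos s)
  calc (l + 1) * (j + 1).choose (s + 1) * (s + 1)
      = (l + 1) * ((j + 1).choose (s + 1) * (s + 1)) := by ring
    _ = (l + 1) * ((j + 1) * j.choose s) := by rw [← h1]
    _ = (j + 1) * ((l + 1) * j.choose s) := by ring
    _ ≤ (j + 1) * ((l + 1) * l.choose s) := Nat.mul_le_mul_left _ (Nat.mul_le_mul_left _ hmono)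
    _ = (j + 1) * ((l + 1).choose (s + 1) * (s + 1)) := by rw [← h2]
    _ = (j + 1) * (l + 1).choose (s + 1) * (s + 1) := by ring

set_option maxHeartbeats 1600000 in
lemma main_bound {p ε : ℝ} (hp : 0 < p) (hp1 : p < 1) (hε : 0 < ε) (hε1 : ε < 1)
    (hple : ENNReal.ofReal p ≤ 1) {r n k : ℕ} (hr : 2 ≤ r)
    (hk1 : 1 ≤ k) (hk2 : (k : ℝ) ≤ (n : ℝ) / 2) (hn1 : 1 ≤ n)
    {x : ℝ}
    (hx : (k : ℝ) ^ 2 * ((1 / (1 - p)) ^ (((k.choose r : ℝ)) / k)) / ((n : ℝ) - k) ≤ x)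
    (hx1 : x ≤ 1) (hx0 : 0 ≤ x) :
    (1 : ℝ) - k * x ^ 2 ≤
      (Measure.pi (fun _ : Finset (Fin n) => (PMF.bernoulli (Real.toNNReal p) (ENNReal.coe_le_one_iff.mp hple)).toMeasure)
        {E : Finset (Fin n) → Bool | ∃ S : Finset (Fin n), S.card = k ∧
          ∀ e ∈ Finset.powersetCard r S, E e = false}).toReal := by
  classical
  set q : ℝ := 1 - p with hqdef
  have hq : 0 < q := by simp [hqdef]; linarith
  have hq1 : q < 1 := by simp [hqdef]; linarith
  set μ := Measure.pi
    (fun _ : Finset (Fin n) => (PMF.bernoulli (Real.toNNReal p) (ENNReal.coe_le_one_iff.mp hple)).toMeasure) with hμdef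
  have hprob : IsProbabilityMeasure μ := by infer_instance
  set 𝒮 : Finset (Finset (Fin n)) := Finset.powersetCard k (Finset.univ : Finset (Fin n))
    with h𝒮def
  set N : ℕ := n.choose k with hNdef
  set m : ℕ := k.choose r with hmdef
  have hkn : k ≤ n := by
    have : (k : ℝ) ≤ (n : ℝ) := le_trans hk2 (by
      have : (0:ℝ) ≤ (n:ℝ) := Nat.cast_nonneg n
      linarith)
    exact_mod_cast this
  have hnk : (0 : ℝ) < (n : ℝ) - k := by
    have hn : (1 : ℝ) ≤ (n : ℝ) := by exact_mod_cast hn1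
    have hk : (1 : ℝ) ≤ (k : ℝ) := by exact_mod_cast hk1
    nlinarith
  have hcard𝒮 : 𝒮.card = N := by
    rw [h𝒮def, Finset.card_powersetCard, Finset.card_univ, Fintype.card_fin]
  -- events
  set A : Finset (Fin n) → Set (Finset (Fin n) → Bool) :=
    fun S => {E | ∀ e ∈ Finset.powersetCard r S, E e = false} with hAdef
  set w : (Finset (Fin n) → Bool) → ℝ := fun ω => (μ {ω}).toReal with hwdef
  set X : (Finset (Fin n) → Bool) → ℝ :=
    fun ω => ∑ S ∈ 𝒮, if ω ∈ A S then (1 : ℝ) else 0 with hXdef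
  have hw0 : ∀ ω, 0 ≤ w ω := fun ω => ENNReal.toReal_nonneg
  -- measure of any set as a weighted sum
  have hPset : ∀ s : Set (Finset (Fin n) → Bool),
      (μ s).toReal = ∑ ω ∈ Finset.univ.filter (· ∈ s), w ω := by
    intro s
    have h1 : (↑(Finset.univ.filter (· ∈ s)) : Set (Finset (Fin n) → Bool)) = s := by
      ext ω; simp
    have h2 : μ s = ∑ ω ∈ Finset.univ.filter (· ∈ s), μ {ω} := by
      conv_lhs => rw [← h1]
      exact meas_finset_sum μ _
    rw [h2]
    exact ENNReal.toReal_sum (fun ω _ => measure_ne_top μ _)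
  -- single event measure
  have hmeasA : ∀ S ∈ 𝒮, (μ (A S)).toReal = q ^ m := by
    intro S hS
    have hScard : S.card = k := (Finset.mem_powersetCard.1 hS).2
    rw [hAdef]
    rw [hμdef, cyl_meas hp.le hple]
    rw [Finset.card_powersetCard, hScard, ENNReal.toReal_pow, ENNReal.toReal_ofReal hq.le]
  -- pairwise intersections
  have hinterset : ∀ S T : Finset (Fin n), A S ∩ A T =
      {E : Finset (Fin n) → Bool |
        ∀ e ∈ Finset.powersetCard r S ∪ Finset.powersetCard r T, E e = false} := by
    intro S T
    ext E
    simp only [hAdef, Set.mem_inter_iff, Set.mem_setOf_eq, Finset.mem_union]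
    constructor
    · rintro ⟨h1, h2⟩ e (he | he)
      · exact h1 e he
      · exact h2 e he
    · intro h
      exact ⟨fun e he => h e (Or.inl he), fun e he => h e (Or.inr he)⟩
  have hcardinter : ∀ S ∈ 𝒮, ∀ T ∈ 𝒮,
      (Finset.powersetCard r S ∪ Finset.powersetCard r T).card
        = 2 * m - ((S ∩ T).card).choose r := by
    intro S hS T hT
    have hScard : S.card = k := (Finset.mem_powersetCard.1 hS).2
    have hTcard : T.card = k := (Finset.mem_powersetCard.1 hT).2
    have hint : Finset.powersetCard r S ∩ Finset.powersetCard r T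
        = Finset.powersetCard r (S ∩ T) := by
      ext e
      simp only [Finset.mem_inter, Finset.mem_powersetCard, Finset.subset_inter_iff]
      tauto
    have h := Finset.card_union_add_card_inter
      (Finset.powersetCard r S) (Finset.powersetCard r T)
    rw [hint, Finset.card_powersetCard, Finset.card_powersetCard, Finset.card_powersetCard,
      hScard, hTcard] at h
    have hle : ((S ∩ T).card).choose r ≤ m := by
      rw [hmdef]
      exact Nat.choose_le_choose r (le_trans (Finset.card_le_card Finset.inter_subset_left)
        hScard.le)
    omega
  have hmeasAB : ∀ S ∈ 𝒮, ∀ T ∈ 𝒮,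
      (μ (A S ∩ A T)).toReal = q ^ (2 * m - ((S ∩ T).card).choose r) := by
    intro S hS T hT
    rw [hinterset S T, hμdef, cyl_meas hp.le hple, hcardinter S hS T hT,
      ENNReal.toReal_pow, ENNReal.toReal_ofReal hq.le]
  -- first moment
  have hsum1 : ∑ ω, w ω * X ω = (N : ℝ) * q ^ m := by
    have swap : ∑ ω, w ω * X ω
        = ∑ S ∈ 𝒮, ∑ ω, (if ω ∈ A S then w ω else 0) := by
      rw [Finset.sum_comm]
      refine Finset.sum_congr rfl fun ω _ => ?_
      rw [hXdef, Finset.mul_sum]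
      refine Finset.sum_congr rfl fun S _ => ?_
      split <;> simp
    rw [swap]
    have inner : ∀ S ∈ 𝒮, ∑ ω, (if ω ∈ A S then w ω else 0) = (μ (A S)).toReal := by
      intro S hS
      rw [hPset (A S), Finset.sum_filter]
      exact Finset.sum_congr rfl fun a _ => by congr
    rw [Finset.sum_congr rfl inner, Finset.sum_congr rfl hmeasA, Finset.sum_const, hcard𝒮,
      nsmul_eq_mul]
  -- second moment
  have hsum2 : ∑ ω, w ω * X ω ^ 2 = ∑ S ∈ 𝒮, ∑ T ∈ 𝒮, (μ (A S ∩ A T)).toReal := by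
    have expand : ∀ ω, X ω ^ 2 = ∑ S ∈ 𝒮, ∑ T ∈ 𝒮,
        (if ω ∈ A S ∩ A T then (1 : ℝ) else 0) := by
      intro ω
      rw [sq, hXdef, Finset.sum_mul_sum]
      refine Finset.sum_congr rfl fun S _ => Finset.sum_congr rfl fun T _ => ?_
      by_cases h1 : ω ∈ A S <;> by_cases h2 : ω ∈ A T <;>
        simp [h1, h2, Set.mem_inter_iff]
    calc ∑ ω, w ω * X ω ^ 2
        = ∑ ω, ∑ S ∈ 𝒮, ∑ T ∈ 𝒮, (if ω ∈ A S ∩ A T then w ω else 0) := by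
          refine Finset.sum_congr rfl fun ω _ => ?_
          rw [expand ω, Finset.mul_sum]
          refine Finset.sum_congr rfl fun S _ => ?_
          rw [Finset.mul_sum]
          refine Finset.sum_congr rfl fun T _ => ?_
          split <;> simp
      _ = ∑ S ∈ 𝒮, ∑ T ∈ 𝒮, ∑ ω, (if ω ∈ A S ∩ A T then w ω else 0) := by
          rw [Finset.sum_comm]
          refine Finset.sum_congr rfl fun S _ => Finset.sum_comm
      _ = ∑ S ∈ 𝒮, ∑ T ∈ 𝒮, (μ (A S ∩ A T)).toReal := by
          refine Finset.sum_congr rfl fun S _ => Finset.sum_congr rfl fun T _ => ?_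
          rw [hPset (A S ∩ A T), Finset.sum_filter]
          exact (Finset.sum_congr rfl fun a _ => by congr).symm
  -- inverse base
  set bb : ℝ := q⁻¹ with hbbdef
  have hbb0 : 0 < bb := by positivity
  have hbb1 : (1 : ℝ) ≤ bb := by
    rw [hbbdef]
    rw [le_inv_comm₀ one_pos hq]
    simpa using hq1.le
  set Bx : ℝ := bb ^ ((m : ℝ) / k) with hBxdef
  have hBx0 : 0 < Bx := Real.rpow_pos_of_pos hbb0 _
  have hk0 : (0 : ℝ) < (k : ℝ) := by exact_mod_cast hk1
  have hxge : (k : ℝ) ^ 2 * Bx / ((n : ℝ) - k) ≤ x := by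
    have hbbeq : bb = 1 / (1 - p) := by rw [hbbdef, hqdef, one_div]
    rw [hBxdef, hbbeq]
    exact hx
  -- per-i term bound
  have hperi : ∀ i ∈ Finset.Icc r k,
      (k.choose i : ℝ) * (n.choose (k - i) : ℝ) * bb ^ (i.choose r) ≤ (N : ℝ) * x ^ 2 := by
    intro i hi
    obtain ⟨hri, hik⟩ := Finset.mem_Icc.1 hi
    have h1 : (k.choose i : ℝ) ≤ (k : ℝ) ^ i := by exact_mod_cast Nat.choose_le_pow k i
    have hnkpow : (0 : ℝ) < ((n : ℝ) - k) ^ i := pow_pos hnk i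
    have h2 : (n.choose (k - i) : ℝ) ≤ (N : ℝ) * (k : ℝ) ^ i / ((n : ℝ) - k) ^ i := by
      rw [le_div_iff₀ hnkpow]
      have hnat := choose_ratio hkn i hik
      have : ((n.choose (k - i) * (n - k) ^ i : ℕ) : ℝ) ≤ ((n.choose k * k ^ i : ℕ) : ℝ) := by
        exact_mod_cast hnat
      push_cast [Nat.cast_sub hkn] at this
      rw [hNdef]
      convert this using 2
    have h3 : bb ^ (i.choose r) ≤ Bx ^ i := by
      have hexp : ((i.choose r : ℕ) : ℝ) ≤ (i : ℝ) * ((m : ℝ) / k) := by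
        have hnat := choose_slope hik (le_trans one_le_two hr)
        rw [mul_div_assoc'] at *
        rw [le_div_iff₀ hk0]
        calc ((i.choose r : ℕ) : ℝ) * k = (k * i.choose r : ℕ) := by push_cast; ring
          _ ≤ ((i * k.choose r : ℕ) : ℝ) := by exact_mod_cast hnat
          _ = (i : ℝ) * (m : ℝ) := by rw [hmdef]; push_cast; ring
      calc bb ^ (i.choose r) = bb ^ ((i.choose r : ℕ) : ℝ) := (Real.rpow_natCast bb _).symm
        _ ≤ bb ^ ((i : ℝ) * ((m : ℝ) / k)) := Real.rpow_le_rpow_of_exponent_le hbb1 hexp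
        _ = (bb ^ ((m : ℝ) / k)) ^ ((i : ℝ)) := by
            rw [mul_comm, Real.rpow_mul hbb0.le, Real.rpow_natCast]
        _ = Bx ^ i := by rw [hBxdef, Real.rpow_natCast]
    have hN0 : (0 : ℝ) < (N : ℝ) := by
      rw [hNdef]; exact_mod_cast Nat.choose_pos hkn
    calc (k.choose i : ℝ) * (n.choose (k - i) : ℝ) * bb ^ (i.choose r)
        ≤ (k : ℝ) ^ i * ((N : ℝ) * (k : ℝ) ^ i / ((n : ℝ) - k) ^ i) * Bx ^ i := by
          have hb0 : (0:ℝ) ≤ bb ^ (i.choose r) := by positivity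
          have := mul_le_mul (mul_le_mul h1 h2 (Nat.cast_nonneg _) (by positivity)) h3 hb0
            (by positivity)
          exact this
      _ = (N : ℝ) * ((k : ℝ) ^ 2 * Bx / ((n : ℝ) - k)) ^ i := by
          rw [div_pow, mul_pow]
          field_simp
          ring
      _ ≤ (N : ℝ) * x ^ i := by
          have hple' := pow_le_pow_left₀ (by positivity : (0:ℝ) ≤ (k : ℝ) ^ 2 * Bx / ((n : ℝ) - k)) hxge i
          exact mul_le_mul_of_nonneg_left hple' hN0.le
      _ ≤ (N : ℝ) * x ^ 2 := by
          gcongr (N : ℝ) * ?_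
          exact pow_le_pow_of_le_one hx0 hx1 (by omega)
  -- row sum bound
  have hrow : ∀ S ∈ 𝒮, ∑ T ∈ 𝒮, (μ (A S ∩ A T)).toReal
      ≤ q ^ (2 * m) * ((N : ℝ) * (1 + (k : ℝ) * x ^ 2)) := by
    intro S hS
    have hScard : S.card = k := (Finset.mem_powersetCard.1 hS).2
    have hik : ∀ T ∈ 𝒮, (S ∩ T).card ≤ k := by
      intro T _
      exact le_trans (Finset.card_le_card Finset.inter_subset_left) hScard.le
    have hcle : ∀ T ∈ 𝒮, ((S ∩ T).card).choose r ≤ 2 * m := by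
      intro T hT
      have : ((S ∩ T).card).choose r ≤ m := by
        rw [hmdef]; exact Nat.choose_le_choose r (hik T hT)
      omega
    have hterm : ∀ T ∈ 𝒮, (μ (A S ∩ A T)).toReal
        = q ^ (2 * m) * bb ^ (((S ∩ T).card).choose r) := by
      intro T hT
      rw [hmeasAB S hS T hT, pow_sub₀ q hq.ne' (hcle T hT), hbbdef, inv_pow]
    rw [Finset.sum_congr rfl hterm, ← Finset.mul_sum]
    have hsplit := Finset.sum_filter_add_sum_filter_not 𝒮
      (fun T => r ≤ (S ∩ T).card) (fun T => bb ^ (((S ∩ T).card).choose r))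
    rw [← hsplit]
    have hpart1 : ∑ T ∈ 𝒮.filter (fun T => ¬ r ≤ (S ∩ T).card),
        bb ^ (((S ∩ T).card).choose r) ≤ (N : ℝ) := by
      have : ∀ T ∈ 𝒮.filter (fun T => ¬ r ≤ (S ∩ T).card),
          bb ^ (((S ∩ T).card).choose r) = 1 := by
        intro T hT
        have h := (Finset.mem_filter.1 hT).2
        rw [Nat.choose_eq_zero_of_lt (by omega), pow_zero]
      rw [Finset.sum_congr rfl this, Finset.sum_const, nsmul_eq_mul, mul_one]
      have := Finset.card_filter_le 𝒮 (fun T => ¬ r ≤ (S ∩ T).card)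
      rw [hcard𝒮] at this
      exact_mod_cast this
    have hpart2 : ∑ T ∈ 𝒮.filter (fun T => r ≤ (S ∩ T).card),
        bb ^ (((S ∩ T).card).choose r) ≤ (N : ℝ) * ((k : ℝ) * x ^ 2) := by
      have hmaps : ∀ T ∈ 𝒮.filter (fun T => r ≤ (S ∩ T).card),
          (S ∩ T).card ∈ Finset.Icc r k := by
        intro T hT
        obtain ⟨hT𝒮, hrT⟩ := Finset.mem_filter.1 hT
        exact Finset.mem_Icc.2 ⟨hrT, hik T hT𝒮⟩
      rw [← Finset.sum_fiberwise_of_maps_to hmaps (fun T => bb ^ (((S ∩ T).card).choose r))]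
      have hfib : ∀ i ∈ Finset.Icc r k,
          ∑ T ∈ (𝒮.filter (fun T => r ≤ (S ∩ T).card)).filter (fun T => (S ∩ T).card = i),
            bb ^ (((S ∩ T).card).choose r) ≤ (N : ℝ) * x ^ 2 := by
        intro i hi
        have heq : ∀ T ∈ (𝒮.filter (fun T => r ≤ (S ∩ T).card)).filter
            (fun T => (S ∩ T).card = i), bb ^ (((S ∩ T).card).choose r) = bb ^ (i.choose r) := by
          intro T hT
          rw [(Finset.mem_filter.1 hT).2]
        rw [Finset.sum_congr rfl heq, Finset.sum_const, nsmul_eq_mul]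
        have hsub : (𝒮.filter (fun T => r ≤ (S ∩ T).card)).filter (fun T => (S ∩ T).card = i)
            ⊆ 𝒮.filter (fun T => (S ∩ T).card = i) := by
          intro T hT
          simp only [Finset.mem_filter] at hT ⊢
          exact ⟨hT.1.1, hT.2⟩
        have hcard : ((𝒮.filter (fun T => r ≤ (S ∩ T).card)).filter
            (fun T => (S ∩ T).card = i)).card ≤ k.choose i * n.choose (k - i) := by
          refine le_trans (Finset.card_le_card hsub) ?_
          rw [h𝒮def]
          exact fiber_card S hScard
        calc (((𝒮.filter (fun T => r ≤ (S ∩ T).card)).filter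
              (fun T => (S ∩ T).card = i)).card : ℝ) * bb ^ (i.choose r)
            ≤ ((k.choose i * n.choose (k - i) : ℕ) : ℝ) * bb ^ (i.choose r) := by
              exact mul_le_mul_of_nonneg_right (by exact_mod_cast hcard) (by positivity)
          _ = (k.choose i : ℝ) * (n.choose (k - i) : ℝ) * bb ^ (i.choose r) := by
              push_cast; ring
          _ ≤ (N : ℝ) * x ^ 2 := hperi i hi
      calc ∑ i ∈ Finset.Icc r k, ∑ T ∈ (𝒮.filter (fun T => r ≤ (S ∩ T).card)).filter
            (fun T => (S ∩ T).card = i), bb ^ (((S ∩ T).card).choose r)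
          ≤ ∑ i ∈ Finset.Icc r k, (N : ℝ) * x ^ 2 := Finset.sum_le_sum hfib
        _ = ((Finset.Icc r k).card : ℝ) * ((N : ℝ) * x ^ 2) := by
            rw [Finset.sum_const, nsmul_eq_mul]
        _ ≤ (k : ℝ) * ((N : ℝ) * x ^ 2) := by
            refine mul_le_mul_of_nonneg_right ?_ (by positivity)
            rw [Nat.card_Icc]
            exact_mod_cast (by omega : k + 1 - r ≤ k)
        _ = (N : ℝ) * ((k : ℝ) * x ^ 2) := by ring
    have hq2m : (0 : ℝ) ≤ q ^ (2 * m) := by positivity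
    calc q ^ (2 * m) * (∑ T ∈ 𝒮.filter (fun T => r ≤ (S ∩ T).card),
            bb ^ (((S ∩ T).card).choose r)
          + ∑ T ∈ 𝒮.filter (fun T => ¬ r ≤ (S ∩ T).card), bb ^ (((S ∩ T).card).choose r))
        ≤ q ^ (2 * m) * ((N : ℝ) * ((k : ℝ) * x ^ 2) + (N : ℝ)) := by
          exact mul_le_mul_of_nonneg_left (add_le_add hpart2 hpart1) hq2m
      _ = q ^ (2 * m) * ((N : ℝ) * (1 + (k : ℝ) * x ^ 2)) := by ring
  -- Cauchy-Schwarz conclusion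
  set U : Set (Finset (Fin n) → Bool) := {E | ∃ S : Finset (Fin n), S.card = k ∧
      ∀ e ∈ Finset.powersetCard r S, E e = false} with hUdef
  have hXU : ∀ ω, X ω ≠ 0 → ω ∈ Finset.univ.filter (· ∈ U) := by
    intro ω hω
    rw [hXdef] at hω
    obtain ⟨S, hS𝒮, hSne⟩ := Finset.exists_ne_zero_of_sum_ne_zero hω
    have hωA : ω ∈ A S := by
      by_contra h
      simp [h] at hSne
    refine Finset.mem_filter.2 ⟨Finset.mem_univ _, ?_⟩
    exact ⟨S, (Finset.mem_powersetCard.1 hS𝒮).2, hωA⟩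
  have hcs := cs_core w X hw0 (Finset.univ.filter (· ∈ U)) hXU
  rw [hsum1, hsum2] at hcs
  have hwU : (∑ ω ∈ Finset.univ.filter (· ∈ U), w ω) = (μ U).toReal := by
    rw [hPset U]
    congr 1
    ext ω
    simp [Finset.mem_filter]
  have hN0 : (0 : ℝ) < (N : ℝ) := by
    rw [hNdef]; exact_mod_cast Nat.choose_pos hkn
  have hqm : (0 : ℝ) < q ^ m := pow_pos hq m
  have hub : ∑ S ∈ 𝒮, ∑ T ∈ 𝒮, (μ (A S ∩ A T)).toReal
      ≤ (N : ℝ) * (q ^ (2 * m) * ((N : ℝ) * (1 + (k : ℝ) * x ^ 2))) := by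
    calc ∑ S ∈ 𝒮, ∑ T ∈ 𝒮, (μ (A S ∩ A T)).toReal
        ≤ ∑ S ∈ 𝒮, q ^ (2 * m) * ((N : ℝ) * (1 + (k : ℝ) * x ^ 2)) :=
          Finset.sum_le_sum hrow
      _ = (N : ℝ) * (q ^ (2 * m) * ((N : ℝ) * (1 + (k : ℝ) * x ^ 2))) := by
          rw [Finset.sum_const, hcard𝒮, nsmul_eq_mul]
  have hPU0 : 0 ≤ (μ U).toReal := ENNReal.toReal_nonneg
  have ht0 : 0 ≤ (k : ℝ) * x ^ 2 := by positivity
  have hkey : 1 ≤ (μ U).toReal * (1 + (k : ℝ) * x ^ 2) := by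
    have hD : (0 : ℝ) < (N : ℝ) ^ 2 * q ^ (2 * m) := by positivity
    have h2m : q ^ (2 * m) = (q ^ m) ^ 2 := by rw [← pow_mul, mul_comm]
    have hchain : (N : ℝ) ^ 2 * q ^ (2 * m) * 1
        ≤ (N : ℝ) ^ 2 * q ^ (2 * m) * ((μ U).toReal * (1 + (k : ℝ) * x ^ 2)) := by
      calc (N : ℝ) ^ 2 * q ^ (2 * m) * 1 = ((N : ℝ) * q ^ m) ^ 2 := by rw [h2m]; ring
        _ ≤ (μ U).toReal * ((N : ℝ) * (q ^ (2 * m) * ((N : ℝ) * (1 + (k : ℝ) * x ^ 2)))) := by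
            rw [hwU] at hcs
            refine le_trans hcs ?_
            exact mul_le_mul_of_nonneg_left hub hPU0
        _ = (N : ℝ) ^ 2 * q ^ (2 * m) * ((μ U).toReal * (1 + (k : ℝ) * x ^ 2)) := by ring
    have := le_of_mul_le_mul_left hchain hD
    linarith
  have hPU1 : (μ U).toReal ≤ 1 := by
    have h1 : μ U ≤ 1 := prob_le_one
    calc (μ U).toReal ≤ (1 : ℝ≥0∞).toReal := ENNReal.toReal_mono (by simp) h1
      _ = 1 := by simp
  nlinarith [hkey, ht0, hPU0, hPU1]

set_option maxHeartbeats 3000000 in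
/-- With `b = 1/(1-p)` and `α_ε = (1−ε)·(r!·log_b n)^{1/(r−1)}`, whp as `n → ∞` the
random `r`-uniform hypergraph `H_r(n,p)` contains an independent set of size at least `α_ε`. -/
theorem stmt_3 (p ε : ℝ) (hp : 0 < p) (hp1 : p < 1) (hε : 0 < ε) (hε1 : ε < 1)
    (r : ℕ) (hr : 2 ≤ r) (hple : ENNReal.ofReal p ≤ 1) :
    Tendsto
      (fun n : ℕ =>
        Measure.pi (fun _ : Finset (Fin n) => (PMF.bernoulli (Real.toNNReal p) (ENNReal.coe_le_one_iff.mp hple)).toMeasure)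
          {E : Finset (Fin n) → Bool |
            ∃ S : Finset (Fin n),
              (∀ e ∈ S.powerset, e.card = r → E e = false) ∧
              (S.card : ℝ) ≥
                (1 - ε) * ((r.factorial : ℝ) * Real.logb (1 / (1 - p)) n) ^ ((1 : ℝ) / (r - 1))})
      atTop (nhds 1) := by
  classical
  set b' : ℝ := 1 / (1 - p) with hb'def
  have h1p : 0 < 1 - p := by linarith
  have hb1 : 1 < b' := by
    rw [hb'def, lt_div_iff₀ h1p]; linarith
  have hb0 : 0 < b' := lt_trans one_pos hb1
  have hlogb : 0 < Real.log b' := Real.log_pos hb1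
  set c : ℝ := (1 : ℝ) / ((r : ℝ) - 1) with hcdef
  have hrR : (1 : ℝ) ≤ (r : ℝ) - 1 := by
    have : (2 : ℝ) ≤ (r : ℝ) := by exact_mod_cast hr
    linarith
  have hc0 : 0 < c := by rw [hcdef]; positivity
  have hc1 : c ≤ 1 := by
    rw [hcdef, div_le_one (by linarith)]; linarith
  set δ : ℝ := ε / 40 with hδdef
  have hδ0 : 0 < δ := by rw [hδdef]; linarith
  set C₁ : ℝ := (r.factorial : ℝ) / (δ * Real.log b') + 2 with hC₁def
  have hC₁ : 0 < C₁ := by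
    rw [hC₁def]
    have : 0 ≤ (r.factorial : ℝ) / (δ * Real.log b') := by positivity
    linarith
  set L : ℕ → ℝ := fun n => Real.logb b' n with hLdef
  set M : ℕ → ℝ := fun n => ((r.factorial : ℝ) * L n) ^ c with hMdef
  set α : ℕ → ℝ := fun n => (1 - ε) * ((r.factorial : ℝ) * L n) ^ c with hαdef
  set k : ℕ → ℕ := fun n => ⌈α n⌉₊ with hkdef
  set G : ℕ → ℝ := fun n => 2 * C₁ ^ 2 * (n : ℝ) ^ (2 * δ - ε / 2) with hGdef
  set E : ℕ → ℝ := fun n => 4 * C₁ ^ 5 * (n : ℝ) ^ (5 * δ - ε) with hEdef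
  have hfacpos : (0 : ℝ) < (r.factorial : ℝ) := by exact_mod_cast r.factorial_pos
  -- tendsto facts
  have hLtendsto : Tendsto L atTop atTop := by
    rw [hLdef]
    exact (Real.tendsto_logb_atTop hb1).comp tendsto_natCast_atTop_atTop
  have hMtendsto : Tendsto M atTop atTop := by
    rw [hMdef]
    exact (tendsto_rpow_atTop hc0).comp (hLtendsto.const_mul_atTop hfacpos)
  -- eventual facts
  have ev1 : ∀ᶠ n : ℕ in atTop, 1 ≤ L n := hLtendsto.eventually_ge_atTop 1
  have ev2 : ∀ᶠ n : ℕ in atTop, 2 / ε ≤ M n := hMtendsto.eventually_ge_atTop _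
  have ev2' : ∀ᶠ n : ℕ in atTop, 1 ≤ M n := hMtendsto.eventually_ge_atTop 1
  have ev5 : ∀ᶠ n : ℕ in atTop, 1 ≤ n := eventually_ge_atTop 1
  have ev3 : ∀ᶠ n : ℕ in atTop, C₁ * (n : ℝ) ^ δ ≤ (n : ℝ) / 2 := by
    have h0 : Tendsto (fun x : ℝ => 2 * C₁ * x ^ (δ - 1)) atTop (nhds 0) := by
      have h := (tendsto_rpow_neg_atTop
        (by linarith [hδ0, hε1, hε] : 0 < 1 - δ)).const_mul (2 * C₁)
      rw [mul_zero] at h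
      have heq : δ - 1 = -(1 - δ) := by ring
      rw [heq]
      exact h
    have h1 : ∀ᶠ x : ℝ in atTop, 2 * C₁ * x ^ (δ - 1) ≤ 1 :=
      (h0.eventually_lt_const one_pos).mono fun x hx => hx.le
    have h2 : ∀ᶠ x : ℝ in atTop, 1 ≤ x := eventually_ge_atTop 1
    have h3 : ∀ᶠ n : ℕ in atTop,
        2 * C₁ * (n : ℝ) ^ (δ - 1) ≤ 1 ∧ 1 ≤ (n : ℝ) :=
      tendsto_natCast_atTop_atTop.eventually (h1.and h2)
    refine h3.mono fun n ⟨hn1, hn2⟩ => ?_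
    have hx0 : (0 : ℝ) < (n : ℝ) := by linarith
    have hkey : (n : ℝ) ^ δ = (n : ℝ) ^ (δ - 1) * (n : ℝ) := by
      rw [← Real.rpow_add_one hx0.ne' (δ - 1)]; ring_nf
    have hmul := mul_le_mul_of_nonneg_right hn1 hx0.le
    calc C₁ * (n : ℝ) ^ δ = (2 * C₁ * (n : ℝ) ^ (δ - 1) * (n : ℝ)) / 2 := by rw [hkey]; ring
      _ ≤ (1 * (n : ℝ)) / 2 := (div_le_div_iff_of_pos_right (by norm_num)).2 hmul
      _ = (n : ℝ) / 2 := by ring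
  have ev4 : ∀ᶠ n : ℕ in atTop, G n ≤ 1 := by
    have h0 : Tendsto G atTop (nhds 0) := by
      rw [hGdef]
      have h := ((tendsto_rpow_neg_atTop
        (by rw [hδdef]; linarith : 0 < -(2 * δ - ε / 2))).comp
          tendsto_natCast_atTop_atTop).const_mul (2 * C₁ ^ 2)
      rw [mul_zero] at h
      have heq : 2 * δ - ε / 2 = -(-(2 * δ - ε / 2)) := by ring
      rw [heq]
      exact h
    exact (h0.eventually_lt_const one_pos).mono fun n hn => hn.le
  -- the measure lower bound, eventually
  have hmain : ∀ᶠ n : ℕ in atTop,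
      ENNReal.ofReal (1 - E n) ≤
      Measure.pi (fun _ : Finset (Fin n) => (PMF.bernoulli (Real.toNNReal p) (ENNReal.coe_le_one_iff.mp hple)).toMeasure)
          {E : Finset (Fin n) → Bool |
            ∃ S : Finset (Fin n),
              (∀ e ∈ S.powerset, e.card = r → E e = false) ∧
              (S.card : ℝ) ≥
                (1 - ε) * ((r.factorial : ℝ) * Real.logb (1 / (1 - p)) n) ^ ((1 : ℝ) / (r - 1))} := by
    filter_upwards [ev1, ev2, ev2', ev3, ev4, ev5] with n hL1 hM2 hM1 h3 h4 hn1
    have hn0 : (0:ℝ) < (n:ℝ) := by exact_mod_cast hn1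
    set K : ℕ := k n with hKKdef
    have hαM : α n = (1 - ε) * M n := rfl
    have hM0 : (0:ℝ) ≤ M n := le_trans zero_le_one hM1
    have hα0 : 0 ≤ α n := by rw [hαM]; nlinarith
    have hkα : α n ≤ (K : ℝ) := Nat.le_ceil _
    have hkup : (K : ℝ) < α n + 1 := Nat.ceil_lt_add_one hα0
    have hK1 : 1 ≤ K := by
      rw [hKKdef, hkdef]
      refine Nat.ceil_pos.2 ?_
      rw [hαM]; nlinarith
    have hk0' : (0:ℝ) < (K:ℝ) := by exact_mod_cast hK1
    have hfac1 : (1:ℝ) ≤ (r.factorial : ℝ) := by exact_mod_cast r.factorial_pos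
    -- K ≤ C₁ n^δ
    have hMle : M n ≤ (r.factorial : ℝ) * L n := by
      have h1 : (1:ℝ) ≤ (r.factorial : ℝ) * L n := by nlinarith
      calc M n = ((r.factorial : ℝ) * L n) ^ c := rfl
        _ ≤ ((r.factorial : ℝ) * L n) ^ (1:ℝ) := Real.rpow_le_rpow_of_exponent_le h1 hc1
        _ = (r.factorial : ℝ) * L n := Real.rpow_one _
    have hLle : L n ≤ (n:ℝ) ^ δ / (δ * Real.log b') := by
      have hlog : Real.log (n:ℝ) ≤ (n:ℝ) ^ δ / δ := Real.log_le_rpow_div (Nat.cast_nonneg n) hδ0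
      have : L n = Real.log (n:ℝ) / Real.log b' := by rw [hLdef]; rfl
      rw [this, ← div_div]
      gcongr
    have hnδ1 : (1:ℝ) ≤ (n:ℝ) ^ δ := Real.one_le_rpow (by exact_mod_cast hn1) hδ0.le
    have hkC₁ : (K:ℝ) ≤ C₁ * (n:ℝ) ^ δ := by
      have hfacL : (r.factorial : ℝ) * L n ≤ ((r.factorial : ℝ) / (δ * Real.log b')) * (n:ℝ) ^ δ := by
        calc (r.factorial : ℝ) * L n ≤ (r.factorial : ℝ) * ((n:ℝ) ^ δ / (δ * Real.log b')) := by
              exact mul_le_mul_of_nonneg_left hLle (by positivity)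
          _ = ((r.factorial : ℝ) / (δ * Real.log b')) * (n:ℝ) ^ δ := by ring
      have hC₁eq : C₁ * (n:ℝ) ^ δ
          = ((r.factorial : ℝ) / (δ * Real.log b')) * (n:ℝ) ^ δ + 2 * (n:ℝ) ^ δ := by
        rw [hC₁def]; ring
      have hαle : α n ≤ M n := by rw [hαM]; nlinarith
      calc (K:ℝ) ≤ α n + 1 := hkup.le
        _ ≤ M n + 1 := by linarith
        _ ≤ (r.factorial : ℝ) * L n + 1 := by linarith
        _ ≤ (r.factorial : ℝ) / (δ * Real.log b') * (n:ℝ) ^ δ + 1 := by linarith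
        _ ≤ (r.factorial : ℝ) / (δ * Real.log b') * (n:ℝ) ^ δ + 2 * (n:ℝ) ^ δ := by linarith
        _ = C₁ * (n:ℝ) ^ δ := hC₁eq.symm
    have hkn2 : (K:ℝ) ≤ (n:ℝ) / 2 := le_trans hkC₁ h3
    -- step2 : K ≤ (1-ε/2) M
    have hstep2 : (K:ℝ) ≤ (1 - ε/2) * M n := by
      have h2ε : 1 ≤ (ε/2) * M n := by
        have h := (div_le_iff₀ hε).1 hM2
        nlinarith
      have hkup' := hkup.le
      rw [hαM] at hkup'
      nlinarith
    -- M^(r-1) = r! L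
    have hbase0 : (0:ℝ) ≤ (r.factorial : ℝ) * L n := by nlinarith
    have hMpow : (M n) ^ (r - 1) = (r.factorial : ℝ) * L n := by
      have h1 : (M n) ^ (r - 1) = ((r.factorial : ℝ) * L n) ^ (c * ((r - 1 : ℕ) : ℝ)) := by
        rw [← Real.rpow_natCast (M n) (r - 1)]
        rw [hMdef]
        exact (Real.rpow_mul hbase0 c _).symm
      have hcw : c * ((r - 1 : ℕ) : ℝ) = 1 := by
        rw [Nat.cast_sub (by omega : 1 ≤ r), Nat.cast_one, hcdef]
        field_simp
      rw [h1, hcw, Real.rpow_one]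
    -- exponent bound
    have hexpB : ((K.choose r : ℝ)) / K ≤ (1 - ε/2) * L n := by
      have h1 : (K.choose r : ℝ) ≤ (K:ℝ) ^ r / (r.factorial : ℝ) := Nat.choose_le_pow_div r K
      have hfac0 : (0:ℝ) < (r.factorial : ℝ) := by linarith
      have hKr : (K:ℝ) ^ r = (K:ℝ) ^ (r - 1) * K := by
        rw [← pow_succ]; congr 1; omega
      have h2 : ((K.choose r : ℝ)) / K ≤ (K:ℝ) ^ (r - 1) / (r.factorial : ℝ) := by
        rw [div_le_div_iff₀ hk0' hfac0]
        calc (K.choose r : ℝ) * (r.factorial : ℝ)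
            ≤ ((K:ℝ) ^ r / (r.factorial : ℝ)) * (r.factorial : ℝ) :=
              mul_le_mul_of_nonneg_right h1 hfac0.le
          _ = (K:ℝ) ^ r := by field_simp
          _ = (K:ℝ) ^ (r - 1) * K := hKr
      have h3' : (K:ℝ) ^ (r - 1) ≤ ((1 - ε/2) * M n) ^ (r - 1) :=
        pow_le_pow_left₀ (by positivity) hstep2 _
      have h4' : ((1 - ε/2) : ℝ) ^ (r - 1) ≤ 1 - ε/2 := by
        have h05 : (0:ℝ) ≤ 1 - ε/2 := by linarith
        have := pow_le_pow_of_le_one h05 (by linarith) (by omega : 1 ≤ r - 1)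
        simpa using this
      have hL0 : (0:ℝ) ≤ L n := by linarith
      calc ((K.choose r : ℝ)) / K ≤ (K:ℝ) ^ (r - 1) / (r.factorial : ℝ) := h2
        _ ≤ ((1 - ε/2) * M n) ^ (r - 1) / (r.factorial : ℝ) := by gcongr
        _ = (1 - ε/2) ^ (r - 1) * ((r.factorial : ℝ) * L n) / (r.factorial : ℝ) := by
            rw [mul_pow, hMpow]
        _ = (1 - ε/2) ^ (r - 1) * L n := by field_simp
        _ ≤ (1 - ε/2) * L n := mul_le_mul_of_nonneg_right h4' hL0
    have hBle : b' ^ (((K.choose r : ℝ)) / K) ≤ (n:ℝ) ^ (1 - ε/2) := by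
      calc b' ^ (((K.choose r : ℝ)) / K) ≤ b' ^ ((1 - ε/2) * L n) :=
            Real.rpow_le_rpow_of_exponent_le hb1.le hexpB
        _ = (b' ^ (L n)) ^ (1 - ε/2) := by
            rw [mul_comm, Real.rpow_mul hb0.le]
        _ = (n:ℝ) ^ (1 - ε/2) := by
            rw [hLdef]
            rw [Real.rpow_logb hb0 (ne_of_gt hb1) hn0]
    -- the x bound
    have hnK : (n:ℝ) / 2 ≤ (n:ℝ) - K := by linarith
    have hxG : (K:ℝ) ^ 2 * (b' ^ (((K.choose r : ℝ)) / K)) / ((n:ℝ) - K) ≤ G n := by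
      have hnum : (K:ℝ) ^ 2 * (b' ^ (((K.choose r : ℝ)) / K))
          ≤ (C₁ * (n:ℝ) ^ δ) ^ 2 * (n:ℝ) ^ (1 - ε/2) := by
        refine mul_le_mul (pow_le_pow_left₀ (by positivity) hkC₁ 2) hBle ?_ (by positivity)
        exact (Real.rpow_pos_of_pos hb0 _).le
      have e1 : ((n:ℝ) ^ δ) ^ 2 = (n:ℝ) ^ (2 * δ) := by
        rw [← Real.rpow_natCast ((n:ℝ) ^ δ) 2, ← Real.rpow_mul hn0.le]
        congr 1
        push_cast
        ring
      have e2 : (n:ℝ) ^ (2 * δ) * (n:ℝ) ^ (1 - ε/2) = (n:ℝ) ^ (2 * δ + (1 - ε/2)) :=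
        (Real.rpow_add hn0 _ _).symm
      have e3 : (n:ℝ) ^ (2 * δ + (1 - ε/2)) / ((n:ℝ) / 2) = 2 * (n:ℝ) ^ (2 * δ - ε/2) := by
        have h5 : (n:ℝ) ^ (2 * δ + (1 - ε/2)) = (n:ℝ) ^ (2 * δ - ε/2) * (n:ℝ) := by
          rw [← Real.rpow_add_one hn0.ne']
          ring_nf
        rw [h5]
        field_simp
      calc (K:ℝ) ^ 2 * (b' ^ (((K.choose r : ℝ)) / K)) / ((n:ℝ) - K)
          ≤ ((C₁ * (n:ℝ) ^ δ) ^ 2 * (n:ℝ) ^ (1 - ε/2)) / ((n:ℝ) / 2) := by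
            exact div_le_div₀ (by positivity) hnum (by positivity) hnK
        _ = C₁ ^ 2 * (((n:ℝ) ^ δ) ^ 2 * (n:ℝ) ^ (1 - ε/2)) / ((n:ℝ) / 2) := by ring
        _ = C₁ ^ 2 * ((n:ℝ) ^ (2 * δ + (1 - ε/2))) / ((n:ℝ) / 2) := by rw [e1, e2]
        _ = C₁ ^ 2 * ((n:ℝ) ^ (2 * δ + (1 - ε/2)) / ((n:ℝ) / 2)) := by ring
        _ = G n := by rw [e3, hGdef]; ring
    have hG0 : 0 ≤ G n := by rw [hGdef]; positivity
    -- apply the main bound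
    rw [hb'def] at hxG
    have hmb := main_bound hp hp1 hε hε1 hple hr hK1 hkn2 hn1 hxG h4 hG0
    -- K * G^2 ≤ E n
    have hKG : (K:ℝ) * (G n) ^ 2 ≤ E n := by
      have hGsq : (G n) ^ 2 = 4 * C₁ ^ 4 * (n:ℝ) ^ (2 * (2 * δ - ε/2)) := by
        have e : ((n:ℝ) ^ (2 * δ - ε/2)) ^ 2 = (n:ℝ) ^ (2 * (2 * δ - ε/2)) := by
          rw [← Real.rpow_natCast ((n:ℝ) ^ (2 * δ - ε/2)) 2, ← Real.rpow_mul hn0.le]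
          congr 1
          push_cast
          ring
        rw [hGdef, mul_pow, mul_pow, e]
        ring
      calc (K:ℝ) * (G n) ^ 2 ≤ (C₁ * (n:ℝ) ^ δ) * (G n) ^ 2 :=
            mul_le_mul_of_nonneg_right hkC₁ (sq_nonneg _)
        _ = 4 * C₁ ^ 5 * ((n:ℝ) ^ δ * (n:ℝ) ^ (2 * (2 * δ - ε/2))) := by rw [hGsq]; ring
        _ = E n := by
            rw [hEdef, ← Real.rpow_add hn0]
            congr 1
            ring
    have hfinal : (1:ℝ) - E n ≤
        (Measure.pi (fun _ : Finset (Fin n) => (PMF.bernoulli (Real.toNNReal p) (ENNReal.coe_le_one_iff.mp hple)).toMeasure)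
          {E : Finset (Fin n) → Bool | ∃ S : Finset (Fin n), S.card = K ∧
            ∀ e ∈ Finset.powersetCard r S, E e = false}).toReal :=
      le_trans (by linarith) hmb
    -- subset into the target event
    have hsubset : {E : Finset (Fin n) → Bool | ∃ S : Finset (Fin n), S.card = K ∧
        ∀ e ∈ Finset.powersetCard r S, E e = false} ⊆
        {E : Finset (Fin n) → Bool |
          ∃ S : Finset (Fin n),
            (∀ e ∈ S.powerset, e.card = r → E e = false) ∧
            (S.card : ℝ) ≥
              (1 - ε) * ((r.factorial : ℝ) * Real.logb (1 / (1 - p)) n) ^ ((1 : ℝ) / (r - 1))} := by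
      rintro Efun ⟨S, hScard, hSind⟩
      refine ⟨S, ?_, ?_⟩
      · intro e he hecard
        exact hSind e (Finset.mem_powersetCard.2 ⟨Finset.mem_powerset.1 he, hecard⟩)
      · rw [hScard]
        exact le_trans hkα (le_refl _)
    calc ENNReal.ofReal (1 - E n)
        ≤ ENNReal.ofReal ((Measure.pi (fun _ : Finset (Fin n) =>
            (PMF.bernoulli (Real.toNNReal p) (ENNReal.coe_le_one_iff.mp hple)).toMeasure)
          {E : Finset (Fin n) → Bool | ∃ S : Finset (Fin n), S.card = K ∧
            ∀ e ∈ Finset.powersetCard r S, E e = false}).toReal) :=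
          ENNReal.ofReal_le_ofReal hfinal
      _ = Measure.pi (fun _ : Finset (Fin n) =>
            (PMF.bernoulli (Real.toNNReal p) (ENNReal.coe_le_one_iff.mp hple)).toMeasure)
          {E : Finset (Fin n) → Bool | ∃ S : Finset (Fin n), S.card = K ∧
            ∀ e ∈ Finset.powersetCard r S, E e = false} :=
          ENNReal.ofReal_toReal (measure_ne_top _ _)
      _ ≤ _ := measure_mono hsubset
  -- squeeze
  have hEto0 : Tendsto E atTop (nhds 0) := by
    rw [hEdef]
    have h := ((tendsto_rpow_neg_atTop
      (by rw [hδdef]; linarith : 0 < -(5 * δ - ε))).comp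
        tendsto_natCast_atTop_atTop).const_mul (4 * C₁ ^ 5)
    rw [mul_zero] at h
    have heq : 5 * δ - ε = -(-(5 * δ - ε)) := by ring
    rw [heq]
    exact h
  have hlow : Tendsto (fun n => ENNReal.ofReal (1 - E n)) atTop (nhds 1) := by
    have h1 : Tendsto (fun n => 1 - E n) atTop (nhds 1) := by
      have := hEto0.const_sub 1
      simpa using this
    have := (ENNReal.continuous_ofReal.tendsto 1).comp h1
    simpa [Function.comp_def] using this
  have hupper : ∀ n : ℕ,
      Measure.pi (fun _ : Finset (Fin n) => (PMF.bernoulli (Real.toNNReal p) (ENNReal.coe_le_one_iff.mp hple)).toMeasure)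
          {E : Finset (Fin n) → Bool |
            ∃ S : Finset (Fin n),
              (∀ e ∈ S.powerset, e.card = r → E e = false) ∧
              (S.card : ℝ) ≥
                (1 - ε) * ((r.factorial : ℝ) * Real.logb (1 / (1 - p)) n) ^ ((1 : ℝ) / (r - 1))}
        ≤ 1 := fun n => prob_le_one
  exact tendsto_of_tendsto_of_tendsto_of_le_of_le' hlow tendsto_const_nhds hmain
    (Eventually.of_forall hupper)
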